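/- Let G be a tournament on n vertices that is B-imperfect with respect to a total order π, with |B| = b. Suppose one repeatedly removes vertex-disjoint directed triangles until the remaining graph is acyclic, removing t triangles in total. Then t ≤ b, and the resulting topological ordering ρ of the remaining vertices (which is consistent with π on good vertices) satisfies lcs(π, ρ') ≥ n − 3b, where ρ' is ρ extended arbitrarily to all of V. -/

import Mathlib

lemma aux_tri_count {V : Type*} [DecidableEq V] (p : V → Prop) [DecidablePred p]
    (T : List (V × V × V)) (h : ∀ tr ∈ T, p tr.1 ∨ p tr.2.1 ∨ p tr.2.2) :
    T.length ≤ ((T.flatMap fun tr => [tr.1, tr.2.1, tr.2.2]).filter fun x => p x).length := by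
  induction T with
  | nil => simp
  | cons a T ih =>
    have h1 : 0 < (([a.1, a.2.1, a.2.2]).filter fun x => p x).length := by
      rcases h a (by simp) with h' | h' | h'
      · exact List.length_pos_of_mem (a := a.1)
          (List.mem_filter.mpr ⟨by simp, by simpa using h'⟩)
      · exact List.length_pos_of_mem (a := a.2.1)
          (List.mem_filter.mpr ⟨by simp, by simpa using h'⟩)
      · exact List.length_pos_of_mem (a := a.2.2)
          (List.mem_filter.mpr ⟨by simp, by simpa using h'⟩)
    have h2 := ih (fun tr htr => h tr (List.mem_cons_of_mem _ htr))
    simp only [List.flatMap_cons, List.filter_append, List.length_append, List.length_cons]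
    omega

/-- Removing `t` vertex-disjoint directed triangles from a `B`-imperfect tournament until
the remainder is acyclic yields `t ≤ b`, and any topological order of the remainder,
extended arbitrarily to all of `V`, has a common subsequence with `π` of length `≥ n - 3b`. -/
lemma aux_split {α : Type*} [DecidableEq α] (B : Finset α) (l : List α) :
    (l.filter fun x => x ∉ B).length + (l.filter fun x => x ∈ B).length = l.length := by
  induction l with
  | nil => simp
  | cons a l ih => by_cases h : a ∈ B <;> simp [List.filter_cons, h] at ih ⊢ <;> omega

theorem stmt_2 {V : Type*} [Fintype V] [DecidableEq V] [LinearOrder V]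
    (E : V → V → Prop) (n b : ℕ) (hn : Fintype.card V = n)
    (hirr : ∀ v : V, ¬ E v v)
    (htour : ∀ u v : V, u ≠ v → (E u v ↔ ¬ E v u))
    (B : Finset V) (hb : B.card = b)
    (himp : ∀ u v : V, u ≠ v → u ∉ B → v ∉ B → (E u v ↔ u < v))
    -- π as the sorted list of all vertices
    (πL : List V) (hπsort : πL.Pairwise (· < ·)) (hπmem : ∀ v : V, v ∈ πL)
    -- the removed triangles
    (T : List (V × V × V)) (t : ℕ) (ht : T.length = t)
    (htri : ∀ tr ∈ T, E tr.1 tr.2.1 ∧ E tr.2.1 tr.2.2 ∧ E tr.2.2 tr.1)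
    (hdisj : (T.flatMap fun tr => [tr.1, tr.2.1, tr.2.2]).Nodup)
    -- the remaining graph is acyclic
    (hacyc : ¬ ∃ v : V, Relation.TransGen
        (fun a c => a ∉ (T.flatMap fun tr => [tr.1, tr.2.1, tr.2.2]) ∧
                    c ∉ (T.flatMap fun tr => [tr.1, tr.2.1, tr.2.2]) ∧ E a c) v v)
    -- ρ : a topological ordering of the remaining vertices
    (ρ : List V) (hρnd : ρ.Nodup)
    (hρmem : ∀ v : V, v ∈ ρ ↔ v ∉ (T.flatMap fun tr => [tr.1, tr.2.1, tr.2.2]))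
    (hρtopo : ∀ (i j : ℕ) (hi : i < ρ.length) (hj : j < ρ.length),
      i < j → ¬ E (ρ.get ⟨j, hj⟩) (ρ.get ⟨i, hi⟩))
    -- ρ' : an arbitrary extension of ρ to all of V
    (ρ' : List V) (hρ'nd : ρ'.Nodup) (hρ'mem : ∀ v : V, v ∈ ρ')
    (hext : ρ.Sublist ρ') :
    t ≤ b ∧ ∃ l : List V, l.Sublist πL ∧ l.Sublist ρ' ∧
      (n : ℤ) - 3 * b ≤ (l.length : ℤ) := by
  classical
  set R : List V := T.flatMap fun tr => [tr.1, tr.2.1, tr.2.2] with hR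
  -- each triangle has a vertex in B
  have hBtri : ∀ tr ∈ T, tr.1 ∈ B ∨ tr.2.1 ∈ B ∨ tr.2.2 ∈ B := by
    intro tr htr
    by_contra hc
    push_neg at hc
    obtain ⟨h1, h2, h3⟩ := hc
    obtain ⟨e1, e2, e3⟩ := htri tr htr
    have n12 : tr.1 ≠ tr.2.1 := fun h => hirr _ (h ▸ e1)
    have n23 : tr.2.1 ≠ tr.2.2 := fun h => hirr _ (h ▸ e2)
    have n31 : tr.2.2 ≠ tr.1 := fun h => hirr _ (h ▸ e3)
    have l1 := (himp _ _ n12 h1 h2).mp e1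
    have l2 := (himp _ _ n23 h2 h3).mp e2
    have l3 := (himp _ _ n31 h3 h1).mp e3
    exact absurd (l1.trans l2) (not_lt.mpr l3.le)
  -- count B-vertices in R
  have hrB : t ≤ (R.filter fun x => x ∈ B).length := by
    rw [← ht]
    exact aux_tri_count (fun x => x ∈ B) T hBtri
  -- R length
  have hRlen : R.length = 3 * t := by
    rw [hR, ← ht]
    clear * -
    induction T with
    | nil => simp
    | cons a T ih =>
      simp only [List.flatMap_cons, List.length_append, List.length_cons, List.length_nil, ih]
      omega
  -- ρ and R are disjoint, their append has all vertices
  have hdisjρR : ∀ x ∈ ρ, x ∉ R := fun x hx => (hρmem x).mp hx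
  have hndapp : (ρ ++ R).Nodup := by
    rw [List.nodup_append]
    exact ⟨hρnd, hdisj, fun a ha c hc hac => hdisjρR a ha (hac ▸ hc)⟩
  have happlen : ρ.length + R.length = n := by
    have hmem : ∀ v : V, v ∈ ρ ++ R := by
      intro v
      rw [List.mem_append]
      by_cases hv : v ∈ R
      · exact Or.inr hv
      · exact Or.inl ((hρmem v).mpr hv)
    have : (ρ ++ R).toFinset = Finset.univ := by
      ext x; simpa using hmem x
    have hcard := List.toFinset_card_of_nodup hndapp
    rw [this, Finset.card_univ, hn] at hcard
    simpa [List.length_append] using hcard.symm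
  -- the B-vertices of ρ and R together fit in B
  have hfit : (ρ.filter fun x => x ∈ B).length + (R.filter fun x => x ∈ B).length ≤ b := by
    have hnd2 : ((ρ ++ R).filter fun x => x ∈ B).Nodup := hndapp.filter _
    have hsub : ((ρ ++ R).filter fun x => x ∈ B).toFinset ⊆ B := by
      intro x hx
      rw [List.mem_toFinset, List.mem_filter] at hx
      simpa using hx.2
    have := Finset.card_le_card hsub
    rw [List.toFinset_card_of_nodup hnd2, hb] at this
    simpa [List.filter_append, List.length_append] using this
  have htb : t ≤ b := le_trans hrB (by omega)
  refine ⟨htb, ?_⟩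
  -- the common subsequence
  set l : List V := ρ.filter fun x => x ∉ B with hl
  have hlρ : l.Sublist ρ := List.filter_sublist
  -- l is sorted
  have hlsort : l.Pairwise (· < ·) := by
    rw [hl, List.pairwise_filter]
    rw [List.pairwise_iff_getElem]
    intro i j hi hj hij
    intro hiB' hjB'
    have hiB : ρ[i] ∉ B := by simpa using hiB'
    have hjB : ρ[j] ∉ B := by simpa using hjB' 
    have hne : ρ[i] ≠ ρ[j] := by
      intro h
      exact absurd ((List.Nodup.getElem_inj_iff hρnd).mp h) (Nat.ne_of_lt hij)
    have hnotE : ¬ E ρ[j] ρ[i] := hρtopo i j hi hj hij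
    have hE : E ρ[i] ρ[j] := (htour _ _ hne).mpr hnotE
    exact (himp _ _ hne hiB hjB).mp hE
  have hlnd : l.Nodup := hρnd.sublist hlρ
  haveI : IsAntisymm V (· < ·) := ⟨fun a b h1 h2 => absurd h2 (lt_asymm h1)⟩
  have hsubπ : l.Sublist πL := by
    apply List.sublist_of_subperm_of_pairwise _ hlsort hπsort
    exact List.subperm_of_subset hlnd (fun x _ => hπmem x)
  refine ⟨l, hsubπ, hlρ.trans hext, ?_⟩
  -- length count
  have hsplit : l.length + (ρ.filter fun x => x ∈ B).length = ρ.length :=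
    aux_split B ρ
  have h1 : ρ.length + 3 * t = n := by omega
  push_cast
  omega
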